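/- Let k ≥ 3, λ = 2cos(π/k), f_0(q) = λ + 1/q, f(q) = λ - 1/q, and f_j = f^j ∘ f_0 for 0 ≤ j ≤ k-2. Then for all 0 ≤ j ≤ k-2 and all x > 0, f_j(x) = 1 / f_{k-2-j}(1/x). -/

import Mathlib

open Real

theorem stmt5 (k : ℕ) (hk : 3 ≤ k) (lam : ℝ) (hlam : lam = 2 * Real.cos (π / k))
    (f₀ f : ℝ → ℝ) (hf₀ : ∀ q, f₀ q = lam + 1 / q) (hf : ∀ q, f q = lam - 1 / q) :
    ∀ j ≤ k - 2, ∀ x : ℝ, 0 < x →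
      f^[j] (f₀ x) = 1 / (f^[k - 2 - j] (f₀ (1 / x))) := by
  set θ := π / k with hθ
  have hk0 : (0:ℝ) < k := by
    have : 0 < k := by omega
    exact_mod_cast this
  have hθpos : 0 < θ := div_pos Real.pi_pos hk0
  have hkθ : (k:ℝ) * θ = π := by
    rw [hθ]; field_simp
  have hsin : ∀ n : ℕ, n ≤ k → 0 ≤ Real.sin ((n:ℝ) * θ) := by
    intro n hn
    apply Real.sin_nonneg_of_nonneg_of_le_pi (by positivity)
    rw [← hkθ]
    have : (n:ℝ) ≤ k := by exact_mod_cast hn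
    nlinarith
  have hsin' : ∀ n : ℕ, 1 ≤ n → n < k → 0 < Real.sin ((n:ℝ) * θ) := by
    intro n h1 h2
    apply Real.sin_pos_of_pos_of_lt_pi
    · have : (1:ℝ) ≤ n := by exact_mod_cast h1
      nlinarith
    · rw [← hkθ]
      have : (n:ℝ) < k := by exact_mod_cast h2
      nlinarith
  have hrec : ∀ t : ℝ, Real.sin ((t+2)*θ) = lam * Real.sin ((t+1)*θ) - Real.sin (t*θ) := by
    intro t
    have h1 : (t+2)*θ = (t+1)*θ + θ := by ring
    have h2 : t*θ = (t+1)*θ - θ := by ring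
    rw [h1, h2, Real.sin_add, Real.sin_sub, hlam]
    ring
  have key : ∀ j, j ≤ k - 2 → ∀ x : ℝ, 0 < x →
      f^[j] (f₀ x) = (Real.sin (((j:ℝ)+2)*θ) * x + Real.sin (((j:ℝ)+1)*θ)) /
        (Real.sin (((j:ℝ)+1)*θ) * x + Real.sin ((j:ℝ)*θ)) := by
    intro j
    induction j with
    | zero =>
      intro _ x hx
      have hsθ : 0 < Real.sin θ := by
        have := hsin' 1 le_rfl (by omega)
        simpa using this
      simp only [Function.iterate_zero, id, hf₀, Nat.cast_zero, zero_add, zero_mul,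
        Real.sin_zero, add_zero, Real.sin_two_mul]
      rw [hlam]
      field_simp
    | succ j ih =>
      intro hj x hx
      have hj' : j ≤ k - 2 := by omega
      have hjk1 : j + 1 < k := by omega
      have hjk2 : j + 2 < k := by omega
      have hs1 : 0 < Real.sin (((j:ℝ)+1)*θ) := by
        have := hsin' (j+1) (by omega) hjk1; push_cast at this; exact this
      have hs2 : 0 < Real.sin (((j:ℝ)+2)*θ) := by
        have := hsin' (j+2) (by omega) hjk2; push_cast at this; exact this
      have hs0 : 0 ≤ Real.sin ((j:ℝ)*θ) := hsin j (by omega)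
      have hD : 0 < Real.sin (((j:ℝ)+1)*θ) * x + Real.sin ((j:ℝ)*θ) :=
        add_pos_of_pos_of_nonneg (mul_pos hs1 hx) hs0
      have hN : 0 < Real.sin (((j:ℝ)+2)*θ) * x + Real.sin (((j:ℝ)+1)*θ) :=
        add_pos (mul_pos hs2 hx) hs1
      rw [Function.iterate_succ_apply', ih hj' x hx, hf]
      push_cast
      rw [one_div_div, show ((j:ℝ)+1+1)*θ = ((j:ℝ)+2)*θ from by ring,
        eq_div_iff hN.ne', sub_mul, div_mul_cancel₀ _ hN.ne']
      linear_combination (norm := ring_nf) (-x) * hrec ((j:ℝ)+1) - hrec (j:ℝ)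
  intro j hj x hx
  have h2k : 2 ≤ k := by omega
  have hcast : ((k - 2 - j : ℕ) : ℝ) = (k:ℝ) - 2 - (j:ℝ) := by
    rw [Nat.cast_sub hj, Nat.cast_sub h2k]
    norm_num
  rw [key j hj x hx, key (k-2-j) (by omega) (1/x) (by positivity)]
  have e1 : (((k-2-j:ℕ):ℝ)+2)*θ = π - (j:ℝ)*θ := by rw [hcast, ← hkθ]; ring
  have e2 : (((k-2-j:ℕ):ℝ)+1)*θ = π - ((j:ℝ)+1)*θ := by rw [hcast, ← hkθ]; ring
  have e3 : ((k-2-j:ℕ):ℝ)*θ = π - ((j:ℝ)+2)*θ := by rw [hcast, ← hkθ]; ring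
  rw [e1, e2, e3, Real.sin_pi_sub, Real.sin_pi_sub, Real.sin_pi_sub]
  have hs1 : 0 < Real.sin (((j:ℝ)+1)*θ) := by
    have := hsin' (j+1) (by omega) (by omega); push_cast at this; exact this
  have hs2 : 0 ≤ Real.sin (((j:ℝ)+2)*θ) := by
    have := hsin (j+2) (by omega); push_cast at this; exact this
  have hs0 : 0 ≤ Real.sin ((j:ℝ)*θ) := hsin j (by omega)
  have hD1 : 0 < Real.sin (((j:ℝ)+1)*θ) * x + Real.sin ((j:ℝ)*θ) :=
    add_pos_of_pos_of_nonneg (mul_pos hs1 hx) hs0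
  have hD2 : 0 < Real.sin (((j:ℝ)+1)*θ) * (1/x) + Real.sin (((j:ℝ)+2)*θ) :=
    add_pos_of_pos_of_nonneg (mul_pos hs1 (by positivity)) hs2
  have hN2 : 0 < Real.sin ((j:ℝ)*θ) * (1/x) + Real.sin (((j:ℝ)+1)*θ) :=
    add_pos_of_nonneg_of_pos (mul_nonneg hs0 (by positivity)) hs1
  rw [one_div_div]
  field_simp
  ring
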